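/- Let n ≥ 3 be an integer and a ∈ ℂⁿ. For i ∈ {1,…,n} let K_i = {1,…,n} \ {i}. If e_2(a_{K_i}) = 0 for every i ∈ {1,…,n}, then e_2(a_1,…,a_n) = 0 and a has at most one nonzero entry. -/

import Mathlib

open Finset

lemma e2_insert {ι : Type*} [DecidableEq ι] (f : ι → ℂ) (s : Finset ι) {x : ι} (hx : x ∉ s) :
    ∑ P ∈ powersetCard 2 (insert x s), ∏ j ∈ P, f j =
      (∑ P ∈ powersetCard 2 s, ∏ j ∈ P, f j) + f x * ∑ j ∈ s, f j := by
  rw [show (2:ℕ) = Nat.succ 1 from rfl, powersetCard_succ_insert hx, sum_union, sum_image]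
  · congr 1
    rw [Finset.mul_sum]
    rw [powersetCard_one, sum_map, Finset.sum_congr rfl]
    intro j hj
    rw [Function.Embedding.coeFn_mk, prod_insert (by simp only [mem_singleton]; rintro rfl; exact hx hj), prod_singleton]
  · intro P hP Q hQ hPQ
    simp only [mem_coe, mem_powersetCard] at hP hQ
    have hxP : x ∉ P := fun hc => hx (hP.1 hc)
    have hxQ : x ∉ Q := fun hc => hx (hQ.1 hc)
    rw [← erase_insert hxP, ← erase_insert hxQ, hPQ]
  · rw [Finset.disjoint_left]
    intro P hP hP'
    simp only [mem_powersetCard] at hP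
    simp only [mem_image] at hP'
    obtain ⟨Q, hQ, rfl⟩ := hP'
    exact hx (hP.1 (mem_insert_self x Q))

lemma two_mul_e2 {ι : Type*} [DecidableEq ι] (f : ι → ℂ) (s : Finset ι) :
    2 * ∑ P ∈ powersetCard 2 s, ∏ j ∈ P, f j =
      (∑ j ∈ s, f j) ^ 2 - ∑ j ∈ s, f j ^ 2 := by
  induction s using Finset.induction with
  | empty =>
      rw [Finset.powersetCard_eq_empty.mpr (by simp), Finset.sum_empty]
      simp
  | insert x s hx ih =>
    rw [e2_insert f s hx, sum_insert hx, sum_insert hx, mul_add, ih]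
    ring


/-- Let `n ≥ 3` and `a ∈ ℂⁿ`. For `i` let `K_i = {1,…,n} \ {i}`.
If `e₂(a_{K_i}) = 0` for every `i`, then `e₂(a₁,…,aₙ) = 0` and `a` has at most one
nonzero entry. -/
theorem esymm_two_eq_zero_and_at_most_one_nonzero (n : ℕ) (hn : 3 ≤ n) (a : Fin n → ℂ)
    (h : ∀ i : Fin n, ∑ P ∈ Finset.powersetCard 2 (Finset.univ \ {i}), ∏ j ∈ P, a j = 0) :
    (∑ P ∈ Finset.powersetCard 2 (Finset.univ : Finset (Fin n)), ∏ j ∈ P, a j = 0) ∧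
      (Finset.univ.filter fun i => a i ≠ 0).card ≤ 1 := by
  set S := ∑ j, a j with hS
  set E := ∑ P ∈ Finset.powersetCard 2 (Finset.univ : Finset (Fin n)), ∏ j ∈ P, a j with hE
  have key : ∀ i : Fin n, E = a i * (S - a i) := by
    intro i
    have h1 : (Finset.univ : Finset (Fin n)) = insert i (Finset.univ \ {i}) := by
      ext j; by_cases hj : j = i <;> simp [hj]
    have h2 : i ∉ (Finset.univ : Finset (Fin n)) \ {i} := by simp
    have h3 : ∑ j ∈ (Finset.univ : Finset (Fin n)) \ {i}, a j = S - a i := by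
      rw [show (Finset.univ : Finset (Fin n)) \ {i} = Finset.univ.erase i by
        rw [Finset.erase_eq], Finset.sum_erase_eq_sub (Finset.mem_univ i)]
    rw [hE]
    conv_lhs => rw [h1]
    rw [e2_insert a _ h2, h i, h3, zero_add]
  have hsq : 2 * E = S ^ 2 - ∑ j, a j ^ 2 := two_mul_e2 a Finset.univ
  -- sum the key identity
  have hsum : (n : ℂ) * E = S ^ 2 - ∑ j, a j ^ 2 := by
    calc (n : ℂ) * E = ∑ _i : Fin n, E := by simp [mul_comm]
    _ = ∑ i, a i * (S - a i) := Finset.sum_congr rfl fun i _ => key i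
    _ = S ^ 2 - ∑ j, a j ^ 2 := by
        simp only [mul_sub]
        rw [Finset.sum_sub_distrib, ← Finset.sum_mul, ← hS]
        ring_nf
  have hE0 : E = 0 := by
    have : ((n : ℂ) - 2) * E = 0 := by rw [sub_mul, hsum, hsq]; ring
    have hne : (n : ℂ) - 2 ≠ 0 := by
      have : (n : ℂ) ≠ 2 := by
        intro hc
        have h2 : ((n : ℕ) : ℂ) = ((2 : ℕ) : ℂ) := by exact_mod_cast hc
        have := Nat.cast_injective h2
        omega
      exact sub_ne_zero.mpr this
    exact (mul_eq_zero.mp this).resolve_left hne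
  refine ⟨hE0, ?_⟩
  by_contra hcard
  push_neg at hcard
  obtain ⟨i, hi, j, hj, hij⟩ := Finset.one_lt_card.mp hcard
  simp only [Finset.mem_filter] at hi hj
  have hSa : ∀ k : Fin n, a k ≠ 0 → a k = S := by
    intro k hk
    have := key k
    rw [hE0] at this
    have := (mul_eq_zero.mp this.symm).resolve_left hk
    exact (sub_eq_zero.mp this).symm
  have hSne : S ≠ 0 := hSa i hi.2 ▸ hi.2
  have hQ : ∑ k, a k ^ 2 = ((Finset.univ.filter fun i => a i ≠ 0).card : ℂ) * S ^ 2 := by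
    rw [← Finset.sum_filter_ne_zero (s := Finset.univ) (f := fun k => a k ^ 2)]
    rw [show (Finset.univ.filter fun k => a k ^ 2 ≠ 0) = Finset.univ.filter fun k => a k ≠ 0 by
      apply Finset.filter_congr; intro k _; simp [pow_eq_zero_iff]]
    rw [Finset.sum_congr rfl fun k hk => by
      rw [hSa k (Finset.mem_filter.mp hk).2]]
    rw [Finset.sum_const, nsmul_eq_mul]
  have hthis := hsq
  rw [hE0, hQ] at hthis
  have hm : (1 - ((Finset.univ.filter fun i => a i ≠ 0).card : ℂ)) * S ^ 2 = 0 := by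
    linear_combination -hthis
  rcases mul_eq_zero.mp hm with hm1 | hm2
  · have : ((Finset.univ.filter fun i => a i ≠ 0).card : ℂ) = 1 := by linear_combination -hm1
    have h1 : ((Finset.univ.filter fun i => a i ≠ 0).card : ℂ) = ((1:ℕ):ℂ) := by
      simpa using this
    have := Nat.cast_injective h1
    omega
  · exact hSne (pow_eq_zero_iff (by norm_num) |>.mp hm2)
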